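/- Let f : [0,∞)^n → R be absolutely symmetric (invariant under permutations), μ > 0, and A = U Σ_A V^T the singular value decomposition of A ∈ R^{m×n} with Σ_A = diag(σ_A). Then Z* = U diag(σ*) V^T, where σ* minimizes σ ↦ f(σ) + (μ/2)||σ − σ_A||₂² over σ ≥ 0, is an optimal solution of min_Z f(σ(Z)) + (μ/2)||Z − A||_F². -/

import Mathlib

open Matrix

noncomputable def singularValues {m n : ℕ} (A : Matrix (Fin m) (Fin n) ℝ) : Fin n → ℝ :=
  fun i => Real.sqrt ((Matrix.isHermitian_conjTranspose_mul_self A).eigenvalues i)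

noncomputable def frobSq {m n : ℕ} (A : Matrix (Fin m) (Fin n) ℝ) : ℝ := ∑ i, ∑ j, (A i j)^2

/-- Rectangular diagonal m×n matrix with diagonal entries σ. -/
noncomputable def rectDiag {m n : ℕ} (σ : Fin n → ℝ) : Matrix (Fin m) (Fin n) ℝ :=
  fun i j => if (i : ℕ) = (j : ℕ) then σ j else 0

open Polynomial Finset

variable {m n : ℕ}

lemma conjT_eq_transpose (M : Matrix (Fin m) (Fin n) ℝ) : Mᴴ = Mᵀ := by
  ext i j; simp [Matrix.conjTranspose_apply]

lemma frobSq_eq_trace (M : Matrix (Fin m) (Fin n) ℝ) : frobSq M = Matrix.trace (Mᵀ * M) := by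
  unfold frobSq Matrix.trace
  rw [Finset.sum_comm]
  apply Finset.sum_congr rfl
  intro j _
  simp [Matrix.mul_apply, Matrix.diag, pow_two]

lemma frobSq_unitary (P : Matrix (Fin m) (Fin m) ℝ) (Q : Matrix (Fin n) (Fin n) ℝ)
    (hP : Pᵀ * P = 1) (hQ : Qᵀ * Q = 1) (M : Matrix (Fin m) (Fin n) ℝ) :
    frobSq (P * M * Qᵀ) = frobSq M := by
  rw [frobSq_eq_trace, frobSq_eq_trace]
  have : (P * M * Qᵀ)ᵀ * (P * M * Qᵀ) = Q * (Mᵀ * M) * Qᵀ := by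
    rw [Matrix.transpose_mul, Matrix.transpose_mul, Matrix.transpose_transpose]
    rw [show Q * (Mᵀ * Pᵀ) * (P * M * Qᵀ) = Q * (Mᵀ * ((Pᵀ * P) * M)) * Qᵀ by
      simp only [Matrix.mul_assoc]]
    rw [hP, Matrix.one_mul]
  rw [this, Matrix.trace_mul_cycle, ← Matrix.mul_assoc, hQ, Matrix.one_mul]


/-- Abel summation positivity. -/
lemma abel_step (c g : ℕ → ℝ) (hganti : ∀ a b, a ≤ b → g b ≤ g a)
    (hC : ∀ k, 0 ≤ ∑ i ∈ Finset.range k, c i) (N : ℕ) :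
    (∑ i ∈ Finset.range N, c i) * g N ≤ ∑ i ∈ Finset.range N, c i * g i := by
  induction N with
  | zero => simp
  | succ N ih =>
    rw [Finset.sum_range_succ, Finset.sum_range_succ]
    have h1 : (∑ i ∈ Finset.range (N+1), c i) * g (N+1)
        ≤ (∑ i ∈ Finset.range (N+1), c i) * g N :=
      mul_le_mul_of_nonneg_left (hganti N (N+1) (Nat.le_succ N)) (hC (N+1))
    rw [Finset.sum_range_succ] at h1
    nlinarith [ih]

/-- Linear optimization: ∑ d k * t k ≤ sum of d over the first s indices,
for d antitone nonneg, 0 ≤ t ≤ 1, ∑ t ≤ s. -/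
lemma dt_opt (d : Fin n → ℝ) (hd0 : ∀ i, 0 ≤ d i) (hdanti : Antitone d)
    (t : Fin n → ℝ) (ht0 : ∀ k, 0 ≤ t k) (ht1 : ∀ k, t k ≤ 1) (s : ℕ)
    (hts : ∑ k, t k ≤ s) :
    ∑ k, d k * t k ≤ ∑ k ∈ Finset.univ.filter (fun i : Fin n => (i : ℕ) < s), d k := by
  classical
  set S := Finset.univ.filter (fun i : Fin n => (i : ℕ) < s) with hS
  set θ : ℝ := if h : s < n then d ⟨s, h⟩ else 0 with hθ
  have hθ0 : 0 ≤ θ := by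
    rw [hθ]; split
    · exact hd0 _
    · exact le_refl 0
  have hmemS : ∀ k : Fin n, k ∈ S ↔ (k : ℕ) < s := by
    intro k; simp [hS]
  have hdθ_in : ∀ k ∈ S, θ ≤ d k := by
    intro k hk
    rw [hθ]; split
    · next h => exact hdanti (by rw [hmemS] at hk; exact le_of_lt hk : (k : Fin n) ≤ ⟨s, h⟩)
    · exact hd0 k
  have hdθ_out : ∀ k : Fin n, k ∉ S → d k ≤ θ := by
    intro k hk
    rw [hmemS, not_lt] at hk
    have hsn : s < n := lt_of_le_of_lt hk k.2
    rw [hθ, dif_pos hsn]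
    exact hdanti (by exact hk : (⟨s, hsn⟩ : Fin n) ≤ k)
  have hcardS : ∑ k ∈ S, (1:ℝ) = (S.card : ℝ) := by simp
  have key : ∑ k, d k * t k - ∑ k ∈ S, d k ≤ θ * ((∑ k, t k) - S.card) := by
    have e0 : ∑ k, d k * t k - ∑ k ∈ S, d k
        = (∑ k ∈ S, (d k * t k - d k)) + ∑ k ∈ Sᶜ, d k * t k := by
      rw [Finset.sum_sub_distrib, ← Finset.sum_add_sum_compl S (fun k => d k * t k)]
      ring
    have hin : ∑ k ∈ S, (d k * t k - d k) ≤ ∑ k ∈ S, θ * (t k - 1) := by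
      apply Finset.sum_le_sum
      intro k hk
      have := hdθ_in k hk
      nlinarith [ht1 k]
    have hout : ∑ k ∈ Sᶜ, d k * t k ≤ ∑ k ∈ Sᶜ, θ * t k := by
      apply Finset.sum_le_sum
      intro k hk
      rw [Finset.mem_compl] at hk
      nlinarith [ht0 k, hdθ_out k hk]
    have e1 : (∑ k ∈ S, θ * (t k - 1)) + ∑ k ∈ Sᶜ, θ * t k
        = θ * ((∑ k, t k) - S.card) := by
      rw [← Finset.mul_sum, ← Finset.mul_sum, ← mul_add]
      congr 1
      rw [Finset.sum_sub_distrib, hcardS, ← Finset.sum_add_sum_compl S t]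
      ring
    rw [e0, ← e1]
    exact add_le_add hin hout
  have hfin : θ * ((∑ k, t k) - S.card) ≤ 0 := by
    rcases lt_or_ge s n with hsn | hsn
    · have hge : s ≤ S.card := by
        have hSeq : S = Finset.map ⟨Fin.castLE (le_of_lt hsn), Fin.castLE_injective _⟩
            Finset.univ := by
          ext i
          rw [hmemS, Finset.mem_map]
          constructor
          · intro hi
            exact ⟨⟨(i : ℕ), hi⟩, Finset.mem_univ _, by ext; simp⟩
          · rintro ⟨a, -, rfl⟩
            simpa using a.2
        rw [hSeq]
        simp
      have : (s : ℝ) ≤ (S.card : ℝ) := by exact_mod_cast hge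
      nlinarith [hts]
    · have : θ = 0 := by rw [hθ, dif_neg (not_lt.mpr hsn)]
      rw [this]; ring_nf; exact le_refl 0
  linarith [key, hfin]



lemma multiset_map_perm (u : Fin n → ℝ) (σ : Equiv.Perm (Fin n)) :
    Finset.univ.val.map (u ∘ σ) = Finset.univ.val.map u := by
  classical
  rw [← Multiset.map_map, Multiset.map_univ_val_equiv]

/-- Two tuples with the same multiset of values differ by a permutation. -/
lemma exists_perm_of_multiset_eq (f g : Fin n → ℝ)
    (h : Finset.univ.val.map f = Finset.univ.val.map g) :
    ∃ e : Equiv.Perm (Fin n), f = g ∘ e := by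
  classical
  set σ := Tuple.sort f
  set τ := Tuple.sort g
  have hmf : Monotone (f ∘ σ) := Tuple.monotone_sort f
  have hmg : Monotone (g ∘ τ) := Tuple.monotone_sort g
  have hL : List.ofFn (f ∘ σ) = List.ofFn (g ∘ τ) := by
    apply List.Perm.eq_of_sortedLE hmf.sortedLE_ofFn hmg.sortedLE_ofFn
    rw [← Multiset.coe_eq_coe, ← Fin.univ_val_map, ← Fin.univ_val_map,
      multiset_map_perm, multiset_map_perm]
    exact h
  have hfg : f ∘ σ = g ∘ τ := List.ofFn_injective hL
  refine ⟨σ.symm.trans τ, ?_⟩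
  funext i
  have := congrFun hfg (σ.symm i)
  simpa using this



lemma star_eq_transpose' (M : Matrix (Fin n) (Fin n) ℝ) : star M = Mᵀ := by
  ext i j; simp [Matrix.star_apply]

lemma charpoly_conj' (P B : Matrix (Fin n) (Fin n) ℝ) (hP : Pᵀ * P = 1) (hP' : P * Pᵀ = 1) :
    (P * B * Pᵀ).charpoly = B.charpoly := by
  classical
  set Pc := (C : ℝ →+* ℝ[X]).mapMatrix P with hPc
  set Ptc := (C : ℝ →+* ℝ[X]).mapMatrix Pᵀ with hPtc
  have e1 : (C : ℝ →+* ℝ[X]).mapMatrix (P * B * Pᵀ)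
      = Pc * (C : ℝ →+* ℝ[X]).mapMatrix B * Ptc := by
    rw [_root_.map_mul, _root_.map_mul]
  have ePPt : Pc * Ptc = 1 := by
    rw [hPc, hPtc, ← _root_.map_mul, hP', _root_.map_one]
  have ePtP : Ptc * Pc = 1 := by
    rw [hPc, hPtc, ← _root_.map_mul, hP, _root_.map_one]
  have e2 : Pc * Matrix.scalar (Fin n) (X : ℝ[X]) * Ptc = Matrix.scalar (Fin n) (X : ℝ[X]) := by
    have hc : Commute (Matrix.scalar (Fin n) (X : ℝ[X])) Pc :=
      scalar_commute (X : ℝ[X]) (fun r => Commute.all _ _) Pc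
    rw [← hc.eq, mul_assoc, ePPt, mul_one]
  have key : charmatrix (P * B * Pᵀ) = Pc * charmatrix B * Ptc := by
    unfold charmatrix
    rw [Matrix.mul_sub, Matrix.sub_mul, e1, e2]
  rw [Matrix.charpoly, Matrix.charpoly, key, det_mul, det_mul, mul_comm, ← mul_assoc, ← det_mul,
    ePtP, det_one, one_mul]

lemma charpoly_diagonal' (d : Fin n → ℝ) :
    (Matrix.diagonal d).charpoly = ∏ i, (X - C (d i)) := by
  classical
  have : charmatrix (Matrix.diagonal d) = Matrix.diagonal (fun i => X - C (d i)) := by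
    ext i j
    by_cases h : i = j
    · subst h; simp [charmatrix_apply_eq]
    · simp [charmatrix_apply_ne _ _ _ h, Matrix.diagonal_apply_ne _ h]
  rw [Matrix.charpoly, this, det_diagonal]

lemma charpoly_hermitian (B : Matrix (Fin n) (Fin n) ℝ) (hB : B.IsHermitian) :
    B.charpoly = ∏ i, (X - C (hB.eigenvalues i)) := by
  classical
  have hE' : (hB.eigenvectorUnitary : Matrix (Fin n) (Fin n) ℝ)ᵀ *
      (hB.eigenvectorUnitary : Matrix (Fin n) (Fin n) ℝ) = 1 := by
    rw [← star_eq_transpose']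
    exact (Matrix.mem_unitaryGroup_iff').mp (hB.eigenvectorUnitary).2
  have hE'' : (hB.eigenvectorUnitary : Matrix (Fin n) (Fin n) ℝ) *
      (hB.eigenvectorUnitary : Matrix (Fin n) (Fin n) ℝ)ᵀ = 1 := by
    rw [← star_eq_transpose']
    exact (Matrix.mem_unitaryGroup_iff).mp (hB.eigenvectorUnitary).2
  have hBd : B = (hB.eigenvectorUnitary : Matrix (Fin n) (Fin n) ℝ) *
      Matrix.diagonal hB.eigenvalues * (hB.eigenvectorUnitary : Matrix (Fin n) (Fin n) ℝ)ᵀ := by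
    rw [← star_eq_transpose']
    have := hB.spectral_theorem
    simpa [Function.comp] using this
  conv_lhs => rw [hBd]
  rw [charpoly_conj' _ _ hE' hE'', charpoly_diagonal']

lemma prod_X_sub_C_eq (u : Fin n → ℝ) :
    (∏ i, (X - C (u i))) = ((Finset.univ.val.map u).map (fun a => X - C a)).prod := by
  rw [Multiset.map_map]
  rfl

lemma eig_perm_of_charpoly (B : Matrix (Fin n) (Fin n) ℝ) (hB : B.IsHermitian) (g : Fin n → ℝ)
    (h : B.charpoly = ∏ i, (X - C (g i))) :
    ∃ e : Equiv.Perm (Fin n), hB.eigenvalues = g ∘ e := by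
  have h2 : (∏ i, (X - C (hB.eigenvalues i))) = ∏ i, (X - C (g i)) := by
    rw [← charpoly_hermitian B hB, h]
  rw [prod_X_sub_C_eq, prod_X_sub_C_eq] at h2
  have h3 := congrArg Polynomial.roots h2
  rw [Polynomial.roots_multiset_prod_X_sub_C, Polynomial.roots_multiset_prod_X_sub_C] at h3
  exact exists_perm_of_multiset_eq _ _ h3

section Main
variable {m n : ℕ}

lemma sum_dite_range (k : ℕ) (u : Fin n → ℝ) :
    ∑ j ∈ Finset.range k, (if h : j < n then u ⟨j, h⟩ else 0)
      = ∑ i ∈ Finset.univ.filter (fun i : Fin n => (i : ℕ) < k), u i := by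
  classical
  set g : ℕ → ℝ := fun j => if j < k then (if h : j < n then u ⟨j, h⟩ else 0) else 0 with hg
  have h1 : ∑ j ∈ Finset.range k, (if h : j < n then u ⟨j, h⟩ else 0)
      = ∑ j ∈ Finset.range k ∩ Finset.range n, (if h : j < n then u ⟨j, h⟩ else 0) := by
    refine (Finset.sum_subset Finset.inter_subset_left ?_).symm
    intro x hx hx'
    have : ¬ x < n := by
      intro hc
      exact hx' (Finset.mem_inter.mpr ⟨hx, Finset.mem_range.mpr hc⟩)
    rw [dif_neg this]
  have h2 : ∑ j ∈ Finset.range n, g j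
      = ∑ j ∈ Finset.range k ∩ Finset.range n, g j := by
    refine (Finset.sum_subset Finset.inter_subset_right ?_).symm
    intro x hx hx'
    have : ¬ x < k := by
      intro hc
      exact hx' (Finset.mem_inter.mpr ⟨Finset.mem_range.mpr hc, hx⟩)
    rw [hg]
    simp only [if_neg this]
  have h3 : ∑ j ∈ Finset.range k ∩ Finset.range n, (if h : j < n then u ⟨j, h⟩ else 0)
      = ∑ j ∈ Finset.range k ∩ Finset.range n, g j := by
    apply Finset.sum_congr rfl
    intro j hj
    rw [Finset.mem_inter, Finset.mem_range, Finset.mem_range] at hj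
    rw [hg]
    simp only [if_pos hj.1]
  have h4 : ∑ i : Fin n, g (i : ℕ) = ∑ j ∈ Finset.range n, g j :=
    Fin.sum_univ_eq_sum_range g n
  have h5 : ∑ i ∈ Finset.univ.filter (fun i : Fin n => (i : ℕ) < k), u i
      = ∑ i : Fin n, g (i : ℕ) := by
    rw [Finset.sum_filter]
    apply Finset.sum_congr rfl
    intro i _
    rw [hg]
    simp only [dif_pos i.2, Fin.eta]
  rw [h1, h3, ← h2, ← h4, h5]

lemma row_bound (Q : Matrix (Fin m) (Fin n) ℝ) (e01 : Fin n → ℝ)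
    (hQtQ : Qᵀ * Q = Matrix.diagonal e01) (hQe : ∀ i k, Q i k * e01 k = Q i k) (j : Fin m) :
    ∑ k, (Q j k)^2 ≤ 1 := by
  classical
  set P := Q * Qᵀ with hP
  have hPsym : Pᵀ = P := by rw [hP, Matrix.transpose_mul, Matrix.transpose_transpose]
  have hPP : P * P = P := by
    rw [hP]
    calc Q * Qᵀ * (Q * Qᵀ) = Q * (Qᵀ * Q) * Qᵀ := by simp only [Matrix.mul_assoc]
      _ = Q * Matrix.diagonal e01 * Qᵀ := by rw [hQtQ]
      _ = Q * Qᵀ := by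
          congr 1
          ext i k
          rw [Matrix.mul_diagonal]
          exact hQe i k
  have hdiag : P j j = ∑ k, (Q j k)^2 := by
    rw [hP, Matrix.mul_apply]
    apply Finset.sum_congr rfl
    intro k _
    rw [Matrix.transpose_apply, pow_two]
  have h1 : P j j = ∑ l, (P j l)^2 := by
    conv_lhs => rw [← hPP]
    rw [Matrix.mul_apply]
    apply Finset.sum_congr rfl
    intro l _
    have hsymjl : P l j = P j l := by
      have := congrFun (congrFun hPsym j) l
      rw [Matrix.transpose_apply] at this
      exact this
    rw [pow_two, hsymjl]
  have h2 : (P j j)^2 ≤ ∑ l, (P j l)^2 :=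
    Finset.single_le_sum (f := fun l => (P j l)^2) (fun l _ => sq_nonneg _) (Finset.mem_univ j)
  have h3 : 0 ≤ P j j := by
    rw [hdiag]
    exact Finset.sum_nonneg fun k _ => sq_nonneg _
  rw [← hdiag]
  nlinarith [h1, h2, h3]

/-- Key inequality: Hoffman–Wielandt-type bound against a fixed sorted nonnegative
diagonal matrix. -/
lemma key_ineq (hmn : n ≤ m) (W : Matrix (Fin m) (Fin n) ℝ)
    (σA : Fin n → ℝ) (hσA0 : ∀ i, 0 ≤ σA i) (hσAa : Antitone σA) :
    ∃ e : Equiv.Perm (Fin n),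
      ∑ i, (singularValues W (e i) - σA i)^2 ≤ frobSq (W - rectDiag σA) := by
  classical
  have hH : (Wᴴ * W).IsHermitian := Matrix.isHermitian_conjTranspose_mul_self W
  set lam : Fin n → ℝ := hH.eigenvalues with hlam
  have hlam0 : ∀ i, 0 ≤ lam i := fun i =>
    Matrix.eigenvalues_conjTranspose_mul_self_nonneg W i
  set p : Equiv.Perm (Fin n) := (Fin.revPerm).trans (Tuple.sort lam) with hp
  have hpanti : Antitone (fun i => lam (p i)) := by
    intro a b hab
    have hrev : Fin.rev b ≤ Fin.rev a := Fin.rev_le_rev.mpr hab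
    exact Tuple.monotone_sort lam hrev
  set d : Fin n → ℝ := fun i => Real.sqrt (lam (p i)) with hd
  have hsv : ∀ i, singularValues W (p i) = d i := fun i => rfl
  have hd0 : ∀ i, 0 ≤ d i := fun i => Real.sqrt_nonneg _
  have hdanti : Antitone d := fun a b hab => Real.sqrt_le_sqrt (hpanti hab)
  have hdsq : ∀ k, (d k)^2 = lam (p k) := fun k => Real.sq_sqrt (hlam0 _)
  -- eigenvector matrix
  set E : Matrix (Fin n) (Fin n) ℝ := (hH.eigenvectorUnitary : Matrix (Fin n) (Fin n) ℝ)
    with hE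
  have hEl : Eᵀ * E = 1 := by
    rw [hE, ← star_eq_transpose']
    exact (Matrix.mem_unitaryGroup_iff').mp (hH.eigenvectorUnitary).2
  have hEr : E * Eᵀ = 1 := by
    rw [hE, ← star_eq_transpose']
    exact (Matrix.mem_unitaryGroup_iff).mp (hH.eigenvectorUnitary).2
  have hWtW : Wᵀ * W = E * Matrix.diagonal lam * Eᵀ := by
    rw [← conjT_eq_transpose, hE, ← star_eq_transpose']
    have := hH.spectral_theorem
    simpa [Function.comp] using this
  -- permuted eigenvector matrix
  set R : Matrix (Fin n) (Fin n) ℝ := E.submatrix id p with hR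
  have hRapp : ∀ i k, R i k = E i (p k) := fun i k => rfl
  have hRtR : Rᵀ * R = 1 := by
    ext k l
    have h1 := congrFun (congrFun hEl (p k)) (p l)
    simp only [Matrix.mul_apply, Matrix.transpose_apply] at h1 ⊢
    rw [show ∑ i, R i k * R i l = ∑ i, E i (p k) * E i (p l) from rfl, h1]
    by_cases hkl : k = l
    · subst hkl; simp [Matrix.one_apply]
    · rw [Matrix.one_apply_ne (fun hc => hkl (p.injective hc)), Matrix.one_apply_ne hkl]
  have hRRt : R * Rᵀ = 1 := by
    ext a b
    have h1 := congrFun (congrFun hEr a) b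
    simp only [Matrix.mul_apply, Matrix.transpose_apply] at h1 ⊢
    rw [show ∑ k, R a k * R b k = ∑ k, E a (p k) * E b (p k) from rfl]
    rw [Equiv.sum_comp p (fun k => E a k * E b k), h1]
  have hWtW2 : Wᵀ * W = R * Matrix.diagonal (fun k => lam (p k)) * Rᵀ := by
    rw [hWtW]
    ext a b
    rw [Matrix.mul_apply, Matrix.mul_apply]
    rw [← Equiv.sum_comp p (fun k => (E * Matrix.diagonal lam) a k * Eᵀ k b)]
    apply Finset.sum_congr rfl
    intro k _
    rw [Matrix.mul_diagonal, Matrix.mul_diagonal, Matrix.transpose_apply, Matrix.transpose_apply]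
    rfl
  set G : Matrix (Fin m) (Fin n) ℝ := W * R with hG
  have hGtG : Gᵀ * G = Matrix.diagonal (fun k => lam (p k)) := by
    rw [hG, Matrix.transpose_mul]
    calc Rᵀ * Wᵀ * (W * R) = Rᵀ * (Wᵀ * W) * R := by simp only [Matrix.mul_assoc]
      _ = Rᵀ * (R * Matrix.diagonal (fun k => lam (p k)) * Rᵀ) * R := by rw [hWtW2]
      _ = (Rᵀ * R) * Matrix.diagonal (fun k => lam (p k)) * (Rᵀ * R) := by
          simp only [Matrix.mul_assoc]
      _ = Matrix.diagonal (fun k => lam (p k)) := by rw [hRtR]; simp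
  have hWG : W = G * Rᵀ := by
    rw [hG, Matrix.mul_assoc, hRRt, Matrix.mul_one]
  have colG : ∀ k, ∑ i, (G i k)^2 = lam (p k) := by
    intro k
    have h1 := congrFun (congrFun hGtG k) k
    simp only [Matrix.mul_apply, Matrix.transpose_apply, Matrix.diagonal_apply_eq] at h1
    rw [← h1]
    apply Finset.sum_congr rfl
    intro i _
    rw [pow_two]
  set dinv : Fin n → ℝ := fun k => if d k = 0 then 0 else (d k)⁻¹ with hdinv
  set Q : Matrix (Fin m) (Fin n) ℝ := G * Matrix.diagonal dinv with hQ
  have hQapp : ∀ i k, Q i k = G i k * dinv k := by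
    intro i k
    rw [hQ, Matrix.mul_diagonal]
  have hGzero : ∀ i k, d k = 0 → G i k = 0 := by
    intro i k hk
    have h0 : ∑ i, (G i k)^2 = 0 := by
      rw [colG, ← hdsq, hk]; ring
    have := (Finset.sum_eq_zero_iff_of_nonneg (fun i _ => sq_nonneg (G i k))).mp h0 i
      (Finset.mem_univ i)
    exact pow_eq_zero_iff (two_ne_zero) |>.mp this
  have hGQ : ∀ i k, G i k = d k * Q i k := by
    intro i k
    rw [hQapp]
    by_cases hk : d k = 0
    · rw [hGzero i k hk, hk]; ring
    · rw [hdinv]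
      simp only [if_neg hk]
      field_simp
  set e01 : Fin n → ℝ := fun k => if d k = 0 then 0 else 1 with he01
  have hQtQ : Qᵀ * Q = Matrix.diagonal e01 := by
    rw [hQ, Matrix.transpose_mul, Matrix.diagonal_transpose]
    calc Matrix.diagonal dinv * Gᵀ * (G * Matrix.diagonal dinv)
        = Matrix.diagonal dinv * (Gᵀ * G) * Matrix.diagonal dinv := by
          simp only [Matrix.mul_assoc]
      _ = Matrix.diagonal e01 := by
          rw [hGtG, Matrix.diagonal_mul_diagonal, Matrix.diagonal_mul_diagonal]
          apply congrArg Matrix.diagonal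
          funext k
          rw [← hdsq k]
          by_cases hk : d k = 0
          · rw [hdinv, he01]
            simp only [if_pos hk]
            rw [hk]; ring
          · rw [hdinv, he01]
            simp only [if_neg hk]
            rw [pow_two]
            field_simp
  have hQe : ∀ i k, Q i k * e01 k = Q i k := by
    intro i k
    rw [he01]
    by_cases hk : d k = 0
    · rw [hQapp, hdinv]
      simp [hk]
    · simp [hk]
  have rowQ : ∀ j, ∑ k, (Q j k)^2 ≤ 1 := row_bound Q e01 hQtQ hQe
  have colQ : ∀ k, ∑ i, (Q i k)^2 ≤ 1 := by
    intro k
    have h1 := congrFun (congrFun hQtQ k) k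
    simp only [Matrix.mul_apply, Matrix.transpose_apply, Matrix.diagonal_apply_eq] at h1
    have h2 : ∑ i, (Q i k)^2 = e01 k := by
      rw [← h1]
      apply Finset.sum_congr rfl
      intro i _
      rw [pow_two]
    rw [h2, he01]
    by_cases hk : d k = 0 <;> simp [hk]
  have rowR : ∀ i, ∑ k, (R i k)^2 = 1 := by
    intro i
    have h1 := congrFun (congrFun hRRt i) i
    simp only [Matrix.mul_apply, Matrix.transpose_apply, Matrix.one_apply_eq] at h1
    rw [← h1]
    apply Finset.sum_congr rfl
    intro k _
    rw [pow_two]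
  have colR : ∀ k, ∑ i, (R i k)^2 = 1 := by
    intro k
    have h1 := congrFun (congrFun hRtR k) k
    simp only [Matrix.mul_apply, Matrix.transpose_apply, Matrix.one_apply_eq] at h1
    rw [← h1]
    apply Finset.sum_congr rfl
    intro i _
    rw [pow_two]
  -- the diagonal entries of W
  set emb : Fin n → Fin m := Fin.castLE hmn with hemb
  have hembinj : Function.Injective emb := Fin.castLE_injective hmn
  set w : Fin n → ℝ := fun i => W (emb i) i with hw
  -- partial sums bound
  have partial_bound : ∀ s : ℕ,
      ∑ i ∈ Finset.univ.filter (fun i : Fin n => (i : ℕ) < s), w i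
        ≤ ∑ i ∈ Finset.univ.filter (fun i : Fin n => (i : ℕ) < s), d i := by
    intro s
    set S := Finset.univ.filter (fun i : Fin n => (i : ℕ) < s) with hS
    set t : Fin n → ℝ := fun k => ∑ i ∈ S, ((Q (emb i) k)^2 + (R i k)^2)/2 with ht
    have hwi : ∀ i, w i = ∑ k, d k * (Q (emb i) k * R i k) := by
      intro i
      rw [hw]
      simp only
      conv_lhs => rw [hWG]
      rw [Matrix.mul_apply]
      apply Finset.sum_congr rfl
      intro k _
      rw [Matrix.transpose_apply, hGQ (emb i) k]
      ring
    have step1 : ∑ i ∈ S, w i = ∑ k, d k * (∑ i ∈ S, Q (emb i) k * R i k) := by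
      rw [Finset.sum_congr rfl (fun i _ => hwi i), Finset.sum_comm]
      apply Finset.sum_congr rfl
      intro k _
      rw [Finset.mul_sum]
    have step2 : ∑ k, d k * (∑ i ∈ S, Q (emb i) k * R i k) ≤ ∑ k, d k * t k := by
      apply Finset.sum_le_sum
      intro k _
      apply mul_le_mul_of_nonneg_left _ (hd0 k)
      rw [ht]
      apply Finset.sum_le_sum
      intro i _
      nlinarith [sq_nonneg (Q (emb i) k - R i k)]
    have ht0 : ∀ k, 0 ≤ t k := by
      intro k
      apply Finset.sum_nonneg
      intro i _
      positivity
    have hsubQ : ∀ k, ∑ i ∈ S, (Q (emb i) k)^2 ≤ 1 := by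
      intro k
      refine le_trans ?_ (colQ k)
      rw [← Finset.sum_image (f := fun j => (Q j k)^2)
        (g := emb) (fun a _ b _ hab => hembinj hab)]
      apply Finset.sum_le_sum_of_subset_of_nonneg (Finset.subset_univ _)
      intro j _ _
      exact sq_nonneg _
    have hsubR : ∀ k, ∑ i ∈ S, (R i k)^2 ≤ 1 := by
      intro k
      refine le_trans ?_ (le_of_eq (colR k))
      apply Finset.sum_le_sum_of_subset_of_nonneg (Finset.subset_univ _)
      intro j _ _
      exact sq_nonneg _
    have ht1 : ∀ k, t k ≤ 1 := by
      intro k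
      rw [ht]
      simp only
      rw [← Finset.sum_div, Finset.sum_add_distrib]
      linarith [hsubQ k, hsubR k]
    have hcardS : (S.card : ℝ) ≤ (s : ℝ) := by
      have hcs : S.card ≤ (Finset.range s).card := by
        apply Finset.card_le_card_of_injOn (fun i : Fin n => (i : ℕ))
        · intro i hi
          rw [Finset.mem_coe, hS, Finset.mem_filter] at hi
          exact Finset.mem_coe.mpr (Finset.mem_range.mpr hi.2)
        · intro a _ b _ hab
          exact Fin.val_injective hab
      rw [Finset.card_range] at hcs
      exact_mod_cast hcs
    have hts : ∑ k, t k ≤ (s : ℝ) := by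
      have hswap : ∑ k, t k = ∑ i ∈ S, ∑ k, (Q (emb i) k ^ 2 + R i k ^ 2) / 2 := by
        rw [ht]
        exact Finset.sum_comm
      have hb : ∀ i ∈ S, ∑ k, (Q (emb i) k ^ 2 + R i k ^ 2) / 2 ≤ 1 := by
        intro i _
        rw [← Finset.sum_div, Finset.sum_add_distrib]
        linarith [rowQ (emb i), rowR i]
      calc ∑ k, t k = ∑ i ∈ S, ∑ k, (Q (emb i) k ^ 2 + R i k ^ 2) / 2 := hswap
        _ ≤ ∑ i ∈ S, 1 := Finset.sum_le_sum hb
        _ = (S.card : ℝ) := by simp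
        _ ≤ (s : ℝ) := hcardS
    calc ∑ i ∈ S, w i ≤ ∑ k, d k * t k := by rw [step1]; exact step2
      _ ≤ ∑ k ∈ S, d k := dt_opt d hd0 hdanti t ht0 ht1 s hts
  -- Abel summation: ∑ w σA ≤ ∑ d σA
  have hws : ∑ i, w i * σA i ≤ ∑ i, d i * σA i := by
    set cN : ℕ → ℝ := fun j => if h : j < n then (d ⟨j, h⟩ - w ⟨j, h⟩) else 0 with hcN
    set gN : ℕ → ℝ := fun j => if h : j < n then σA ⟨j, h⟩ else 0 with hgN
    have hganti : ∀ a b, a ≤ b → gN b ≤ gN a := by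
      intro a b hab
      rw [hgN]
      by_cases hbn : b < n
      · have han : a < n := lt_of_le_of_lt hab hbn
        simp only [dif_pos hbn, dif_pos han]
        exact hσAa (show (⟨a, han⟩ : Fin n) ≤ ⟨b, hbn⟩ from hab)
      · simp only [dif_neg hbn]
        by_cases han : a < n
        · simp only [dif_pos han]; exact hσA0 _
        · simp only [dif_neg han]; exact le_refl 0
    have hC : ∀ kk, 0 ≤ ∑ i ∈ Finset.range kk, cN i := by
      intro kk
      have hconv : ∑ i ∈ Finset.range kk, cN i
          = ∑ i ∈ Finset.univ.filter (fun i : Fin n => (i : ℕ) < kk), (d i - w i) :=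
        sum_dite_range kk (fun i => d i - w i)
      rw [hconv, Finset.sum_sub_distrib]
      have := partial_bound kk
      linarith
    have habel := abel_step cN gN hganti hC n
    have hgn : gN n = 0 := by rw [hgN]; exact dif_neg (lt_irrefl n)
    have h0 : 0 ≤ ∑ i ∈ Finset.range n, cN i * gN i := by
      have := hC n
      nlinarith [habel, hgn]
    have hconv2 : ∑ i ∈ Finset.range n, cN i * gN i
        = ∑ i, (d i - w i) * σA i := by
      have hpt : ∀ j, cN j * gN j
          = if h : j < n then ((d ⟨j, h⟩ - w ⟨j, h⟩) * σA ⟨j, h⟩) else 0 := by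
        intro j
        rw [hcN, hgN]
        by_cases h : j < n
        · simp only [dif_pos h]
        · simp only [dif_neg h]; ring
      rw [Finset.sum_congr rfl (fun j _ => hpt j),
        sum_dite_range n (fun i => (d i - w i) * σA i)]
      apply Finset.sum_congr
      · apply Finset.filter_true_of_mem
        intro i _
        exact i.2
      · intro i _; rfl
    rw [hconv2] at h0
    have hsplit : ∑ i, (d i - w i) * σA i = ∑ i, d i * σA i - ∑ i, w i * σA i := by
      rw [← Finset.sum_sub_distrib]
      apply Finset.sum_congr rfl
      intro i _
      ring
    linarith [hsplit ▸ h0]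
  -- trace identities
  have hfrobW : frobSq W = ∑ i, (d i)^2 := by
    rw [frobSq_eq_trace, hWtW, Matrix.trace_mul_cycle, hEl, Matrix.one_mul,
      Matrix.trace_diagonal]
    rw [Finset.sum_congr rfl (fun i (_ : i ∈ Finset.univ) => hdsq i), Equiv.sum_comp p lam]
  -- column computations for the rectangular diagonal
  have hcond : ∀ (j : Fin n) (i : Fin m), ((i : ℕ) = (j : ℕ)) ↔ i = emb j := by
    intro j i
    constructor
    · intro h
      apply Fin.ext
      rw [h, hemb]
      simp
    · intro h
      rw [h, hemb]
      simp
  have colD2 : ∀ j, ∑ i : Fin m, (rectDiag σA i j)^2 = (σA j)^2 := by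
    intro j
    have h1 : ∀ i : Fin m, (rectDiag σA i j)^2 = if i = emb j then (σA j)^2 else 0 := by
      intro i
      unfold rectDiag
      rw [if_congr (hcond j i) rfl rfl]
      split <;> simp
    rw [Finset.sum_congr rfl (fun i _ => h1 i), Finset.sum_ite_eq' Finset.univ (emb j)]
    simp
  have colWD : ∀ j, ∑ i : Fin m, W i j * rectDiag σA i j = w j * σA j := by
    intro j
    have h1 : ∀ i : Fin m, W i j * rectDiag σA i j = if i = emb j then W i j * σA j else 0 := by
      intro i
      unfold rectDiag
      rw [if_congr (hcond j i) rfl rfl]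
      split <;> simp
    rw [Finset.sum_congr rfl (fun i _ => h1 i),
      Finset.sum_ite_eq' Finset.univ (emb j) (fun i => W i j * σA j)]
    rw [hw]
    simp
  have hexp2 : frobSq (W - rectDiag σA)
      = frobSq W + ∑ j, (σA j)^2 - 2 * ∑ j, w j * σA j := by
    have hfW : frobSq W = ∑ j : Fin n, ∑ i : Fin m, (W i j)^2 := by
      unfold frobSq; exact Finset.sum_comm
    unfold frobSq
    simp only [Matrix.sub_apply]
    rw [Finset.sum_comm]
    have hcol : ∀ j : Fin n, ∑ i : Fin m, (W i j - rectDiag σA i j)^2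
        = (∑ i : Fin m, (W i j)^2) + (σA j)^2 - 2 * (w j * σA j) := by
      intro j
      have hpt : ∀ i : Fin m, (W i j - rectDiag σA i j)^2
          = (W i j)^2 + (rectDiag σA i j)^2 - 2 * (W i j * rectDiag σA i j) := by
        intro i
        ring
      rw [Finset.sum_congr rfl (fun i _ => hpt i), Finset.sum_sub_distrib,
        Finset.sum_add_distrib, colD2 j, ← Finset.mul_sum, colWD j]
    rw [Finset.sum_congr rfl (fun j _ => hcol j), Finset.sum_sub_distrib,
      Finset.sum_add_distrib, ← Finset.mul_sum]
    have hcomm : (∑ x : Fin n, ∑ i : Fin m, (W i x)^2) = ∑ i : Fin m, ∑ j : Fin n, (W i j)^2 :=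
      Finset.sum_comm
    rw [hcomm]
  -- final combination
  refine ⟨p, ?_⟩
  have hgoal : ∑ i, (singularValues W (p i) - σA i)^2 = ∑ i, (d i - σA i)^2 := by
    apply Finset.sum_congr rfl
    intro i _
    rw [hsv i]
  rw [hgoal]
  have hexp1 : ∑ i, (d i - σA i)^2
      = ∑ i, (d i)^2 + ∑ i, (σA i)^2 - 2 * ∑ i, d i * σA i := by
    have hpt : ∀ i, (d i - σA i)^2 = (d i)^2 + (σA i)^2 - 2 * (d i * σA i) := by
      intro i; ring
    rw [Finset.sum_congr rfl (fun i _ => hpt i), Finset.sum_sub_distrib,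
      Finset.sum_add_distrib, ← Finset.mul_sum]
  rw [hexp1, hexp2, hfrobW]
  linarith [hws]

end Main

section Assemble
variable {m n : ℕ}

lemma val_eq_iff_castLE (hmn : n ≤ m) (j : Fin n) (i : Fin m) :
    ((i : ℕ) = (j : ℕ)) ↔ i = Fin.castLE hmn j := by
  constructor
  · intro h
    apply Fin.ext
    rw [h]
    simp
  · intro h
    rw [h]
    simp

lemma rectDiag_sub (σ τ : Fin n → ℝ) :
    (rectDiag σ : Matrix (Fin m) (Fin n) ℝ) - rectDiag τ = rectDiag (fun i => σ i - τ i) := by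
  ext i j
  rw [Matrix.sub_apply]
  unfold rectDiag
  split <;> simp

lemma frobSq_rectDiag (hmn : n ≤ m) (v : Fin n → ℝ) :
    frobSq (rectDiag v : Matrix (Fin m) (Fin n) ℝ) = ∑ j, (v j)^2 := by
  unfold frobSq
  rw [Finset.sum_comm]
  apply Finset.sum_congr rfl
  intro j _
  have h1 : ∀ i : Fin m, (rectDiag v i j : ℝ)^2 = if i = Fin.castLE hmn j then (v j)^2 else 0 := by
    intro i
    unfold rectDiag
    rw [if_congr (val_eq_iff_castLE hmn j i) rfl rfl]
    split <;> simp
  rw [Finset.sum_congr rfl (fun i _ => h1 i), Finset.sum_ite_eq' Finset.univ (Fin.castLE hmn j)]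
  simp

lemma rectDiag_transpose_mul (hmn : n ≤ m) (σ : Fin n → ℝ) :
    (rectDiag σ : Matrix (Fin m) (Fin n) ℝ)ᵀ * (rectDiag σ : Matrix (Fin m) (Fin n) ℝ)
      = Matrix.diagonal (fun k => (σ k)^2) := by
  ext k l
  rw [Matrix.mul_apply]
  have h1 : ∀ i : Fin m, (rectDiag σ : Matrix (Fin m) (Fin n) ℝ)ᵀ k i * rectDiag σ i l
      = if i = Fin.castLE hmn k then σ k * rectDiag σ i l else 0 := by
    intro i
    rw [Matrix.transpose_apply]
    show (rectDiag σ i k : ℝ) * rectDiag σ i l = _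
    conv_lhs => rw [show (rectDiag σ i k : ℝ) = if i = Fin.castLE hmn k then σ k else 0 by
      unfold rectDiag; rw [if_congr (val_eq_iff_castLE hmn k i) rfl rfl]]
    rw [ite_mul, zero_mul]
  rw [Finset.sum_congr rfl (fun i _ => h1 i),
    Finset.sum_ite_eq' Finset.univ (Fin.castLE hmn k)
      (fun i => σ k * rectDiag σ i l)]
  simp only [Finset.mem_univ, if_true]
  unfold rectDiag
  by_cases hkl : k = l
  · subst hkl
    simp [pow_two]
  · have : ¬ ((Fin.castLE hmn k : ℕ) = (l : ℕ)) := by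
      simp only [Fin.coe_castLE]
      exact fun hc => hkl (Fin.ext hc)
    rw [if_neg this, Matrix.diagonal_apply_ne _ hkl]
    ring

lemma sv_eq (Z : Matrix (Fin m) (Fin n) ℝ) (g : Fin n → ℝ) (hg0 : ∀ i, 0 ≤ g i)
    (hcp : (Zᴴ * Z).charpoly = ∏ i, (X - Polynomial.C ((g i)^2))) :
    ∃ e : Equiv.Perm (Fin n), singularValues Z = g ∘ e := by
  obtain ⟨e, he⟩ := eig_perm_of_charpoly (Zᴴ * Z) (Matrix.isHermitian_conjTranspose_mul_self Z)
    (fun i => (g i)^2) hcp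
  refine ⟨e, funext fun i => ?_⟩
  show Real.sqrt ((Matrix.isHermitian_conjTranspose_mul_self Z).eigenvalues i) = g (e i)
  rw [congrFun he i]
  exact Real.sqrt_sq (hg0 (e i))

end Assemble

/-- If A = U Σ_A Vᵀ is an SVD of A and σ* minimizes σ ↦ f(σ) + (μ/2)||σ - σ_A||² over σ ≥ 0,
then Z* = U diag(σ*) Vᵀ minimizes Z ↦ f(σ(Z)) + (μ/2)||Z - A||_F² for any absolutely
symmetric f. -/
theorem spectral_prox_solution {m n : ℕ} (hmn : n ≤ m)
    (f : (Fin n → ℝ) → ℝ)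
    (hsym : ∀ (e : Equiv.Perm (Fin n)) (σ : Fin n → ℝ), f (σ ∘ e) = f σ)
    (μ : ℝ) (hμ : 0 < μ)
    (A : Matrix (Fin m) (Fin n) ℝ)
    (U : Matrix (Fin m) (Fin m) ℝ) (V : Matrix (Fin n) (Fin n) ℝ)
    (hU : Uᵀ * U = 1) (hU' : U * Uᵀ = 1) (hV : Vᵀ * V = 1) (hV' : V * Vᵀ = 1)
    (σA : Fin n → ℝ) (hσA : ∀ i, 0 ≤ σA i) (hσAsorted : Antitone σA)
    (hA : A = U * (rectDiag σA : Matrix (Fin m) (Fin n) ℝ) * Vᵀ)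
    (σstar : Fin n → ℝ) (hstar_nonneg : ∀ i, 0 ≤ σstar i)
    (hstar : ∀ σ : Fin n → ℝ, (∀ i, 0 ≤ σ i) →
      f σstar + (μ/2) * ∑ i, (σstar i - σA i)^2 ≤ f σ + (μ/2) * ∑ i, (σ i - σA i)^2) :
    ∀ Z : Matrix (Fin m) (Fin n) ℝ,
      f (singularValues (U * (rectDiag σstar : Matrix (Fin m) (Fin n) ℝ) * Vᵀ)) +
        (μ/2) * frobSq (U * (rectDiag σstar : Matrix (Fin m) (Fin n) ℝ) * Vᵀ - A) ≤
      f (singularValues Z) + (μ/2) * frobSq (Z - A) := by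
  intro Z
  set Zs : Matrix (Fin m) (Fin n) ℝ := U * (rectDiag σstar : Matrix (Fin m) (Fin n) ℝ) * Vᵀ
    with hZs
  -- Step A : f (singularValues Zs) = f σstar
  have hZstZs : Zsᵀ * Zs = V * Matrix.diagonal (fun i => (σstar i)^2) * Vᵀ := by
    rw [hZs, Matrix.transpose_mul, Matrix.transpose_mul, Matrix.transpose_transpose]
    calc Vᵀᵀ * ((rectDiag σstar : Matrix (Fin m) (Fin n) ℝ)ᵀ * Uᵀ)
          * (U * (rectDiag σstar : Matrix (Fin m) (Fin n) ℝ) * Vᵀ)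
        = V * ((rectDiag σstar : Matrix (Fin m) (Fin n) ℝ)ᵀ * ((Uᵀ * U)
          * ((rectDiag σstar : Matrix (Fin m) (Fin n) ℝ) * Vᵀ))) := by
          rw [Matrix.transpose_transpose]
          simp only [Matrix.mul_assoc]
      _ = V * ((rectDiag σstar : Matrix (Fin m) (Fin n) ℝ)ᵀ
            * (rectDiag σstar : Matrix (Fin m) (Fin n) ℝ)) * Vᵀ := by
          rw [hU, Matrix.one_mul]
          simp only [Matrix.mul_assoc]
      _ = V * Matrix.diagonal (fun i => (σstar i)^2) * Vᵀ := by
          rw [rectDiag_transpose_mul hmn]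
  have hcpZs : (Zsᴴ * Zs).charpoly = ∏ i, (X - Polynomial.C ((σstar i)^2)) := by
    rw [conjT_eq_transpose, hZstZs, charpoly_conj' V _ hV hV', charpoly_diagonal']
  obtain ⟨e2, he2⟩ := sv_eq Zs σstar hstar_nonneg hcpZs
  have hfZs : f (singularValues Zs) = f σstar := by
    rw [he2]
    exact hsym e2 σstar
  -- Step B : frobSq (Zs - A) = ∑ (σstar - σA)^2
  have hZsA : frobSq (Zs - A) = ∑ i, (σstar i - σA i)^2 := by
    have h1 : Zs - A = U * (rectDiag (fun i => σstar i - σA i) : Matrix (Fin m) (Fin n) ℝ)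
        * Vᵀ := by
      rw [hZs, hA, ← Matrix.sub_mul, ← Matrix.mul_sub, rectDiag_sub]
    rw [h1, frobSq_unitary U V hU hV, frobSq_rectDiag hmn]
  -- Step C : reduce Z
  set W : Matrix (Fin m) (Fin n) ℝ := Uᵀ * Z * V with hW
  have hUAV : Uᵀ * A * V = (rectDiag σA : Matrix (Fin m) (Fin n) ℝ) := by
    rw [hA]
    calc Uᵀ * (U * (rectDiag σA : Matrix (Fin m) (Fin n) ℝ) * Vᵀ) * V
        = (Uᵀ * U) * ((rectDiag σA : Matrix (Fin m) (Fin n) ℝ) * (Vᵀ * V)) := by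
          simp only [Matrix.mul_assoc]
      _ = _ := by rw [hU, hV, Matrix.one_mul, Matrix.mul_one]
  have hfrobZW : frobSq (Z - A) = frobSq (W - rectDiag σA) := by
    have h1 : W - rectDiag σA = Uᵀ * (Z - A) * V := by
      rw [Matrix.mul_sub, Matrix.sub_mul, hW, hUAV]
    have h2 := frobSq_unitary Uᵀ Vᵀ
      (by rw [Matrix.transpose_transpose]; exact hU')
      (by rw [Matrix.transpose_transpose]; exact hV') (Z - A)
    rw [Matrix.transpose_transpose] at h2
    rw [h1, h2]
  have hWtW : Wᵀ * W = Vᵀ * (Zᵀ * Z) * Vᵀᵀ := by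
    rw [hW, Matrix.transpose_mul, Matrix.transpose_mul, Matrix.transpose_transpose,
      Matrix.transpose_transpose]
    calc Vᵀ * (Zᵀ * U) * (Uᵀ * Z * V)
        = Vᵀ * (Zᵀ * ((U * Uᵀ) * (Z * V))) := by simp only [Matrix.mul_assoc]
      _ = Vᵀ * (Zᵀ * Z) * V := by rw [hU', Matrix.one_mul]; simp only [Matrix.mul_assoc]
      _ = Vᵀ * (Zᵀ * Z) * Vᵀᵀ := by rw [Matrix.transpose_transpose]
  have hcpW : (Wᴴ * W).charpoly = ∏ i, (X - Polynomial.C ((singularValues Z i)^2)) := by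
    rw [conjT_eq_transpose, hWtW,
      charpoly_conj' Vᵀ _ (by rw [Matrix.transpose_transpose]; exact hV')
        (by rw [Matrix.transpose_transpose]; exact hV)]
    rw [show Zᵀ * Z = Zᴴ * Z by rw [conjT_eq_transpose]]
    rw [charpoly_hermitian _ (Matrix.isHermitian_conjTranspose_mul_self Z)]
    apply Finset.prod_congr rfl
    intro i _
    congr 1
    show Polynomial.C _ = Polynomial.C ((Real.sqrt _)^2)
    rw [Real.sq_sqrt (Matrix.eigenvalues_conjTranspose_mul_self_nonneg Z i)]
  obtain ⟨e3, he3⟩ := sv_eq W (singularValues Z) (fun i => Real.sqrt_nonneg _) hcpW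
  have hfWZ : f (singularValues W) = f (singularValues Z) := by
    rw [he3]
    exact hsym e3 (singularValues Z)
  -- Step D : key inequality for W
  obtain ⟨e, he⟩ := key_ineq hmn W σA hσA hσAsorted
  set σ' : Fin n → ℝ := fun i => singularValues W (e i) with hσ'
  have hσ'0 : ∀ i, 0 ≤ σ' i := fun i => Real.sqrt_nonneg _
  have hfσ' : f σ' = f (singularValues Z) := by
    rw [show σ' = singularValues W ∘ e from rfl, hsym e (singularValues W)]
    exact hfWZ
  have hmain := hstar σ' hσ'0
  have hkey : (μ/2) * ∑ i, (σ' i - σA i)^2 ≤ (μ/2) * frobSq (Z - A) := by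
    rw [hfrobZW]
    apply mul_le_mul_of_nonneg_left he (by linarith)
  rw [hfZs, hZsA]
  calc f σstar + μ/2 * ∑ i, (σstar i - σA i)^2
      ≤ f σ' + μ/2 * ∑ i, (σ' i - σA i)^2 := hmain
    _ ≤ f (singularValues Z) + μ/2 * frobSq (Z - A) := by
        rw [hfσ']
        linarith [hkey]
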